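/- Let N ≥ 1 be an integer, t > 1 real, and M, c > 0. Define φ : ℝ^N → ℝ by φ(x) = M·e^{−c‖x‖} and the vector field g(y) = ‖∇φ(y)‖^{t−2} ∇φ(y) for y ≠ 0. Then for every x ≠ 0 the field g is differentiable at x and its divergence (the trace of its Fréchet derivative) satisfies div g(x) = c^{t−1} φ(x)^{t−1} ( c(t−1) − (N−1)/‖x‖ ). Consequently, for every V₀ > 0 with c^t (t−1) < V₀/2 one has −div g(x) + (V₀/2) φ(x)^{t−1} > 0 for all x ≠ 0. -/

import Mathlib

open Filter MeasureTheory
open scoped Topology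
open scoped RealInnerProductSpace

/-- The barrier function `φ(x) = M e^{-c ‖x‖}`. -/
noncomputable def phiBarrier (N : ℕ) (M c : ℝ) (x : EuclideanSpace ℝ (Fin N)) : ℝ :=
  M * Real.exp (-c * ‖x‖)

/-- The vector field `g(y) = ‖∇φ(y)‖^{t-2} ∇φ(y)`. -/
noncomputable def gField (N : ℕ) (t M c : ℝ) (y : EuclideanSpace ℝ (Fin N)) :
    EuclideanSpace ℝ (Fin N) :=
  (‖gradient (phiBarrier N M c) y‖ ^ (t - 2)) • gradient (phiBarrier N M c) y

/-- The divergence of `g`, i.e. the trace of its Fréchet derivative. -/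
noncomputable def divG (N : ℕ) (t M c : ℝ) (x : EuclideanSpace ℝ (Fin N)) : ℝ :=
  LinearMap.trace ℝ (EuclideanSpace ℝ (Fin N)) (fderiv ℝ (gField N t M c) x).toLinearMap

noncomputable def kfun (t M c r : ℝ) : ℝ :=
  -((c * M) ^ (t - 1) * Real.exp (-(c * (t - 1)) * r) / r)

noncomputable def kfun' (t M c r : ℝ) : ℝ :=
  -((c * M) ^ (t - 1) *
    ((-(c * (t - 1)) * Real.exp (-(c * (t - 1)) * r) * r - Real.exp (-(c * (t - 1)) * r)) / r ^ 2))

lemma norm_hasFDerivAt {N : ℕ} {x : EuclideanSpace ℝ (Fin N)} (hx : x ≠ 0) :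
    HasFDerivAt (fun y : EuclideanSpace ℝ (Fin N) => ‖y‖) (innerSL ℝ (‖x‖⁻¹ • x)) x := by
  have hr : (0:ℝ) < ‖x‖ := norm_pos_iff.2 hx
  have h1 : HasFDerivAt (fun y : EuclideanSpace ℝ (Fin N) => ‖y‖ ^ 2)
      (2 • innerSL ℝ x) x := (hasStrictFDerivAt_norm_sq x).hasFDerivAt
  have h2 : HasDerivAt Real.sqrt (1 / (2 * Real.sqrt (‖x‖ ^ 2))) (‖x‖ ^ 2) :=
    Real.hasDerivAt_sqrt (by positivity)
  have h3 := h2.comp_hasFDerivAt x h1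
  have he : (Real.sqrt ∘ fun y : EuclideanSpace ℝ (Fin N) => ‖y‖ ^ 2)
      = fun y : EuclideanSpace ℝ (Fin N) => ‖y‖ := by
    funext y; simp [Real.sqrt_sq (norm_nonneg y)]
  rw [he] at h3
  refine h3.congr_fderiv ?_
  ext y
  simp only [innerSL_apply_apply, real_inner_smul_left, ContinuousLinearMap.coe_smul',
    Pi.smul_apply, smul_eq_mul, Real.sqrt_sq (norm_nonneg x)]
  field_simp
  ring

lemma phi_hasGradientAt {N : ℕ} (M c : ℝ) {x : EuclideanSpace ℝ (Fin N)} (hx : x ≠ 0) :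
    HasGradientAt (phiBarrier N M c)
      ((-(c * (M * Real.exp (-c * ‖x‖))) * ‖x‖⁻¹) • x) x := by
  have h2 : HasDerivAt (fun r : ℝ => M * Real.exp (-c * r))
      (M * Real.exp (-c * ‖x‖) * -c) ‖x‖ := by
    have h := ((Real.hasDerivAt_exp (-c * ‖x‖)).comp ‖x‖
      ((hasDerivAt_id ‖x‖).const_mul (-c))).const_mul M
    refine h.congr_deriv ?_
    ring
  have h3 := h2.comp_hasFDerivAt x (norm_hasFDerivAt hx)
  rw [hasGradientAt_iff_hasFDerivAt]
  refine h3.congr_fderiv ?_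
  ext y
  rw [InnerProductSpace.toDual_apply_apply]
  simp only [real_inner_smul_left, ContinuousLinearMap.coe_smul', Pi.smul_apply,
    innerSL_apply_apply, smul_eq_mul]
  ring

lemma cphi_rpow {t M c r : ℝ} (ht : 1 < t) (hM : 0 < M) (hc : 0 < c) :
    (c * (M * Real.exp (-c * r))) ^ (t - 1)
      = (c * M) ^ (t - 1) * Real.exp (-(c * (t - 1)) * r) := by
  rw [show c * (M * Real.exp (-c * r)) = (c * M) * Real.exp (-c * r) by ring,
    Real.mul_rpow (by positivity) (le_of_lt (Real.exp_pos _)), ← Real.exp_mul]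
  ring_nf

lemma gField_eq {N : ℕ} {t M c : ℝ} (ht : 1 < t) (hM : 0 < M) (hc : 0 < c)
    {y : EuclideanSpace ℝ (Fin N)} (hy : y ≠ 0) :
    gField N t M c y = kfun t M c ‖y‖ • y := by
  have hr : (0:ℝ) < ‖y‖ := norm_pos_iff.2 hy
  have hφ : (0:ℝ) < M * Real.exp (-c * ‖y‖) := by positivity
  have hgrad : gradient (phiBarrier N M c) y
      = (-(c * (M * Real.exp (-c * ‖y‖))) * ‖y‖⁻¹) • y := (phi_hasGradientAt M c hy).gradient
  set φ := M * Real.exp (-c * ‖y‖) with hφdef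
  have hnorm : ‖gradient (phiBarrier N M c) y‖ = c * φ := by
    rw [hgrad, norm_smul, Real.norm_eq_abs, abs_mul, abs_neg, abs_of_pos (by positivity),
      abs_inv, abs_norm]
    field_simp
  rw [gField, hnorm, hgrad, smul_smul, kfun]
  congr 1
  have e1 : (c*φ) ^ (t-2) * (c*φ) = (c*φ) ^ (t-1) := by
    rw [← Real.rpow_add_one (by positivity : c*φ ≠ 0) (t-2)]
    congr 1
    ring
  have e2 : (c*φ) ^ (t-1) = (c * M) ^ (t - 1) * Real.exp (-(c * (t - 1)) * ‖y‖) :=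
    cphi_rpow ht hM hc
  calc (c*φ) ^ (t-2) * (-(c * φ) * ‖y‖⁻¹)
      = -((c*φ) ^ (t-2) * (c*φ)) * ‖y‖⁻¹ := by ring
    _ = -((c * M) ^ (t - 1) * Real.exp (-(c * (t - 1)) * ‖y‖) / ‖y‖) := by
        rw [e1, e2]; field_simp

lemma kfun_hasDerivAt (t M c : ℝ) {r : ℝ} (hr : r ≠ 0) :
    HasDerivAt (kfun t M c) (kfun' t M c r) r := by
  have h1 : HasDerivAt (fun s : ℝ => Real.exp (-(c*(t-1)) * s))
      (-(c*(t-1)) * Real.exp (-(c*(t-1)) * r)) r := by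
    have h := (Real.hasDerivAt_exp (-(c*(t-1)) * r)).comp r
      ((hasDerivAt_id r).const_mul (-(c*(t-1))))
    refine h.congr_deriv ?_
    ring
  have h2 := ((h1.div (hasDerivAt_id r) hr).const_mul ((c*M) ^ (t-1))).neg
  have hfun : kfun t M c
      = fun s => -((c*M) ^ (t-1) * (Real.exp (-(c*(t-1)) * s) / s)) := by
    funext s; simp [kfun, mul_div_assoc]
  rw [hfun]
  refine h2.congr_deriv ?_
  simp only [kfun', id_eq]
  ring

theorem stmt14 (N : ℕ) (hN : 1 ≤ N) (t M c : ℝ) (ht : 1 < t) (hM : 0 < M) (hc : 0 < c) :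
    ∀ x : EuclideanSpace ℝ (Fin N), x ≠ 0 →
      (DifferentiableAt ℝ (gField N t M c) x ∧
        divG N t M c x
          = c ^ (t - 1) * (phiBarrier N M c x) ^ (t - 1)
              * (c * (t - 1) - ((N : ℝ) - 1) / ‖x‖)) ∧
      ∀ V₀ : ℝ, 0 < V₀ → c ^ t * (t - 1) < V₀ / 2 →
        0 < -(divG N t M c x) + (V₀ / 2) * (phiBarrier N M c x) ^ (t - 1) := by
  intro x hx
  have hr : (0:ℝ) < ‖x‖ := norm_pos_iff.2 hx
  set r := ‖x‖ with hrdef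
  -- derivative of the model field
  have hs : HasFDerivAt (fun y : EuclideanSpace ℝ (Fin N) => kfun t M c ‖y‖)
      (kfun' t M c r • innerSL ℝ (r⁻¹ • x)) x :=
    (kfun_hasDerivAt t M c hr.ne').comp_hasFDerivAt (h₂ := kfun t M c) (f := fun y => ‖y‖) x (norm_hasFDerivAt hx)
  have hK : HasFDerivAt (fun y : EuclideanSpace ℝ (Fin N) => kfun t M c ‖y‖ • y)
      (kfun t M c r • ContinuousLinearMap.id ℝ (EuclideanSpace ℝ (Fin N))
        + (kfun' t M c r • innerSL ℝ (r⁻¹ • x)).smulRight x) x :=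
    hs.smul (hasFDerivAt_id x)
  have hEq : gField N t M c =ᶠ[𝓝 x] fun y : EuclideanSpace ℝ (Fin N) => kfun t M c ‖y‖ • y := by
    filter_upwards [IsOpen.mem_nhds isOpen_compl_singleton hx] with y hy
    exact gField_eq ht hM hc hy
  have hG : HasFDerivAt (gField N t M c)
      (kfun t M c r • ContinuousLinearMap.id ℝ (EuclideanSpace ℝ (Fin N))
        + (kfun' t M c r • innerSL ℝ (r⁻¹ • x)).smulRight x) x :=
    hK.congr_of_eventuallyEq hEq
  have hdiff : DifferentiableAt ℝ (gField N t M c) x := hG.differentiableAt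
  -- trace computation
  have htr : divG N t M c x = kfun t M c r * N + kfun' t M c r * r := by
    rw [divG, hG.fderiv]
    have hcoe : ((kfun t M c r • ContinuousLinearMap.id ℝ (EuclideanSpace ℝ (Fin N))
        + (kfun' t M c r • innerSL ℝ (r⁻¹ • x)).smulRight x) :
          EuclideanSpace ℝ (Fin N) →L[ℝ] EuclideanSpace ℝ (Fin N)).toLinearMap
        = kfun t M c r • (LinearMap.id : EuclideanSpace ℝ (Fin N) →ₗ[ℝ] EuclideanSpace ℝ (Fin N))
          + dualTensorHom ℝ (EuclideanSpace ℝ (Fin N)) (EuclideanSpace ℝ (Fin N))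
              (((kfun' t M c r • innerSL ℝ (r⁻¹ • x)) : EuclideanSpace ℝ (Fin N) →L[ℝ] ℝ).toLinearMap ⊗ₜ x) := by
      ext y
      simp [ContinuousLinearMap.smulRight_apply, dualTensorHom_apply]
    rw [hcoe, map_add, LinearMap.map_smul, LinearMap.trace_id, LinearMap.trace_eq_contract_apply,
      contractLeft_apply]
    have hdim : Module.finrank ℝ (EuclideanSpace ℝ (Fin N)) = N := finrank_euclideanSpace_fin
    rw [hdim]
    simp only [ContinuousLinearMap.coe_coe, ContinuousLinearMap.coe_smul', Pi.smul_apply,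
      innerSL_apply_apply, smul_eq_mul, real_inner_smul_left, real_inner_self_eq_norm_mul_norm]
    rw [← hrdef]
    field_simp
  -- algebraic identity for the divergence
  have hAE : c ^ (t - 1) * (phiBarrier N M c x) ^ (t - 1)
      = (c * M) ^ (t - 1) * Real.exp (-(c * (t - 1)) * r) := by
    rw [phiBarrier, ← hrdef, ← cphi_rpow ht hM hc (r := r),
      Real.mul_rpow hc.le (by positivity)]
  have hdivval : divG N t M c x
      = c ^ (t - 1) * (phiBarrier N M c x) ^ (t - 1)
          * (c * (t - 1) - ((N : ℝ) - 1) / r) := by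
    rw [htr, hAE, kfun, kfun']
    field_simp
    ring
  refine ⟨⟨hdiff, hdivval⟩, ?_⟩
  intro V₀ hV₀ hV
  have hφpos : (0:ℝ) < (phiBarrier N M c x) ^ (t - 1) :=
    Real.rpow_pos_of_pos (by rw [phiBarrier]; positivity) _
  have hcpow : (0:ℝ) < c ^ (t - 1) := Real.rpow_pos_of_pos hc _
  have hct : c ^ (t - 1) * c = c ^ t := by
    rw [← Real.rpow_add_one hc.ne' (t - 1)]
    congr 1
    ring
  have hNr : 0 ≤ c ^ (t - 1) * (((N : ℝ) - 1) / r) := by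
    have h1 : (1:ℝ) ≤ (N : ℝ) := by exact_mod_cast hN
    exact mul_nonneg hcpow.le (div_nonneg (by linarith) hr.le)
  rw [hdivval]
  have key : c ^ (t - 1) * (c * (t - 1)) < V₀ / 2 := by
    calc c ^ (t - 1) * (c * (t - 1)) = c ^ t * (t - 1) := by rw [← hct]; ring
      _ < V₀ / 2 := hV
  nlinarith [hφpos, hNr, key]
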